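/- Z property for β: if s →β t then t →β* s• and s• →β* t•, where • is the full-superdevelopment map. -/

import Mathlib

/-- Untyped λ-terms in de Bruijn representation (terms up to α-equivalence). -/
inductive Lam : Type
  | var : Nat → Lam
  | app : Lam → Lam → Lam
  | abs : Lam → Lam
  deriving DecidableEq

namespace Lam

/-- Lift (shift up) free variables ≥ k. -/
def lift : Lam → Nat → Lam
  | var i, k => if i < k then var i else var (i + 1)
  | app s t, k => app (lift s k) (lift t k)
  | abs t, k => abs (lift t (k + 1))

/-- Capture-avoiding substitution `t[x := u]`. -/
def subst : Lam → Nat → Lam → Lam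
  | var i, k, u => if i < k then var i else if i = k then u else var (i - 1)
  | app s t, k, u => app (subst s k u) (subst t k u)
  | abs t, k, u => abs (subst t (k + 1) (lift u 0))

/-- `x` occurs free in a term. -/
def IsFree (x : Nat) : Lam → Prop
  | var i => i = x
  | app s t => IsFree x s ∨ IsFree x t
  | abs t => IsFree (x + 1) t

/-- β-reduction: the compatible closure of the β-rule. -/
inductive Beta : Lam → Lam → Prop
  | beta (t s : Lam) : Beta (app (abs t) s) (subst t 0 s)
  | appL {s s' : Lam} (t : Lam) : Beta s s' → Beta (app s t) (app s' t)
  | appR (s : Lam) {t t' : Lam} : Beta t t' → Beta (app s t) (app s t')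
  | abs {t t' : Lam} : Beta t t' → Beta (abs t) (abs t')

/-- Reflexive-transitive closure of β-reduction. -/
abbrev Betas : Lam → Lam → Prop := Relation.ReflTransGen Beta

/-- Application with built-in β-reduction at the root. -/
def appBeta : Lam → Lam → Lam
  | abs u, v => subst u 0 v
  | s, v => app s v

/-- The full-superdevelopment map. -/
def dev : Lam → Lam
  | var i => var i
  | abs t => abs (dev t)
  | app s t => appBeta (dev s) (dev t)

end Lam


namespace Lam

theorem lift_lift (t : Lam) : ∀ i j, i ≤ j → lift (lift t i) (j+1) = lift (lift t j) i := by
  induction t with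
  | var n =>
    intro i j h
    simp only [lift]
    split_ifs <;> simp only [lift] <;> split_ifs <;> first | rfl | omega
  | app a b iha ihb => intro i j h; simp [lift, iha _ _ h, ihb _ _ h]
  | abs a ih => intro i j h; simp [lift, ih (i+1) (j+1) (by omega)]

theorem lift_subst (t : Lam) : ∀ k n u, k ≤ n →
    lift (subst t k u) n = subst (lift t (n+1)) k (lift u n) := by
  induction t with
  | var i =>
    intro k n u h
    simp only [subst, lift]
    split_ifs <;> simp only [lift, subst] <;> split_ifs <;>
      first | rfl | omega | (congr 1; omega)
  | app a b iha ihb => intro k n u h; simp [lift, subst, iha _ _ _ h, ihb _ _ _ h]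
  | abs a ih =>
    intro k n u h
    simp only [lift, subst, ih (k+1) (n+1) (lift u 0) (by omega)]
    rw [lift_lift u 0 n (by omega)]

theorem lift_subst' (t : Lam) : ∀ k n u, k ≤ n →
    lift (subst t n u) k = subst (lift t k) (n+1) (lift u k) := by
  induction t with
  | var i =>
    intro k n u h
    simp only [subst, lift]
    split_ifs <;> simp only [lift, subst] <;> split_ifs <;>
      first | rfl | omega | (congr 1; omega)
  | app a b iha ihb => intro k n u h; simp [lift, subst, iha _ _ _ h, ihb _ _ _ h]
  | abs a ih =>
    intro k n u h
    simp only [lift, subst, ih (k+1) (n+1) (lift u 0) (by omega)]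
    rw [lift_lift u 0 k (by omega)]

theorem subst_lift (t : Lam) : ∀ k u, subst (lift t k) k u = t := by
  induction t with
  | var i =>
    intro k u
    simp only [lift]
    split_ifs <;> simp only [subst] <;> split_ifs <;> first | rfl | omega | (congr 1; omega)
  | app a b iha ihb => intro k u; simp [lift, subst, iha, ihb]
  | abs a ih => intro k u; simp [lift, subst, ih]

theorem subst_subst (t : Lam) : ∀ k n u v, k ≤ n →
    subst (subst t k u) n v = subst (subst t (n+1) (lift v k)) k (subst u n v) := by
  induction t with
  | var i =>
    intro k n u v h
    simp only [subst]
    split_ifs <;> (try simp only [subst]) <;> (try split_ifs) <;>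
      first | rfl | omega | (congr 1; omega) | (exfalso; omega) | (exact (subst_lift v k (subst u n v)).symm)
  | app a b iha ihb => intro k n u v h; simp [subst, iha _ _ _ _ h, ihb _ _ _ _ h]
  | abs a ih =>
    intro k n u v h
    simp only [subst, ih (k+1) (n+1) (lift u 0) (lift v 0) (by omega)]
    rw [lift_lift v 0 k (by omega), lift_subst' u 0 n v (by omega)]

theorem beta_lift {t t' : Lam} (h : Beta t t') : ∀ k, Beta (lift t k) (lift t' k) := by
  induction h with
  | beta a b =>
    intro k
    have : lift (subst a 0 b) k = subst (lift a (k+1)) 0 (lift b k) :=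
      lift_subst a 0 k b (by omega)
    rw [this]
    exact Beta.beta _ _
  | appL t _ ih => intro k; exact Beta.appL _ (ih k)
  | appR s _ ih => intro k; exact Beta.appR _ (ih k)
  | abs _ ih => intro k; exact Beta.abs (ih (k+1))

theorem beta_substL {t t' : Lam} (h : Beta t t') : ∀ k u, Beta (subst t k u) (subst t' k u) := by
  induction h with
  | beta a b =>
    intro k u
    have : subst (subst a 0 b) k u
        = subst (subst a (k+1) (lift u 0)) 0 (subst b k u) :=
      subst_subst a 0 k b u (by omega)
    rw [this]
    exact Beta.beta _ _
  | appL t _ ih => intro k u; exact Beta.appL _ (ih k u)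
  | appR s _ ih => intro k u; exact Beta.appR _ (ih k u)
  | abs _ ih => intro k u; exact Beta.abs (ih (k+1) (lift u 0))

theorem betas_app {a a' b b' : Lam} (h1 : Betas a a') (h2 : Betas b b') :
    Betas (app a b) (app a' b') := by
  refine Relation.ReflTransGen.trans
    (Relation.ReflTransGen.lift (fun x => app x b) (fun _ _ h => Beta.appL _ h) _ _ h1)
    (Relation.ReflTransGen.lift (fun x => app a' x) (fun _ _ h => Beta.appR _ h) _ _ h2)

theorem betas_abs {a a' : Lam} (h : Betas a a') : Betas (abs a) (abs a') :=
  Relation.ReflTransGen.lift abs (fun _ _ h => Beta.abs h) _ _ h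

theorem betas_substR (t : Lam) : ∀ k {u u'}, Beta u u' → Betas (subst t k u) (subst t k u') := by
  induction t with
  | var i =>
    intro k u u' h
    simp only [subst]
    split_ifs
    · exact .refl
    · exact .single h
    · exact .refl
  | app a b iha ihb => intro k u u' h; exact betas_app (iha k h) (ihb k h)
  | abs a ih => intro k u u' h; exact betas_abs (ih (k+1) (beta_lift h 0))

theorem betas_subst {a a' b b' : Lam} (h1 : Betas a a') (h2 : Betas b b') (k : Nat) :
    Betas (subst a k b) (subst a' k b') := by
  have step1 : Betas (subst a k b) (subst a' k b) :=
    Relation.ReflTransGen.lift (fun x => subst x k b) (fun _ _ h => beta_substL h k b) _ _ h1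
  have step2 : Betas (subst a' k b) (subst a' k b') := by
    induction h2 with
    | refl => exact .refl
    | tail _ h ih => exact ih.trans (betas_substR a' k h)
  exact step1.trans step2

theorem betas_app_appBeta (s t : Lam) : Betas (app s t) (appBeta s t) := by
  cases s with
  | var i => exact .refl
  | app a b => exact .refl
  | abs u => exact .single (Beta.beta u t)

theorem betas_abs_inv {w x : Lam} (h : Betas (abs w) x) : ∃ w', x = abs w' ∧ Betas w w' := by
  induction h with
  | refl => exact ⟨w, rfl, .refl⟩
  | tail _ h ih =>
    obtain ⟨w', rfl, hw⟩ := ih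
    cases h with
    | abs h' => exact ⟨_, rfl, hw.tail h'⟩

theorem betas_appBeta {u u' v v' : Lam} (h1 : Betas u u') (h2 : Betas v v') :
    Betas (appBeta u v) (appBeta u' v') := by
  cases u with
  | abs w =>
    obtain ⟨w', rfl, hw⟩ := betas_abs_inv h1
    exact betas_subst hw h2 0
  | var i =>
    exact (betas_app h1 h2).trans (betas_app_appBeta u' v')
  | app a b =>
    exact (betas_app h1 h2).trans (betas_app_appBeta u' v')

theorem appBeta_lift (u v : Lam) (k : Nat) :
    appBeta (lift u k) (lift v k) = lift (appBeta u v) k := by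
  cases u with
  | var i => simp only [lift, appBeta]; split_ifs <;> rfl
  | app a b => rfl
  | abs w =>
    simp only [lift, appBeta]
    exact (lift_subst w 0 k v (by omega)).symm

theorem dev_lift (t : Lam) : ∀ k, dev (lift t k) = lift (dev t) k := by
  induction t with
  | var i => intro k; simp only [lift, dev]; split_ifs <;> rfl
  | app a b iha ihb => intro k; simp only [lift, dev, iha, ihb, appBeta_lift]
  | abs a ih => intro k; simp only [lift, dev, ih]

theorem betas_subst_appBeta (u v w : Lam) (k : Nat) :
    Betas (subst (appBeta u v) k w) (appBeta (subst u k w) (subst v k w)) := by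
  cases u with
  | abs x =>
    have : subst (subst x 0 v) k w
        = subst (subst x (k+1) (lift w 0)) 0 (subst v k w) :=
      subst_subst x 0 k v w (by omega)
    simp only [appBeta, subst, this]
    exact .refl
  | var i =>
    simp only [appBeta, subst]
    exact betas_app_appBeta _ _
  | app a b =>
    simp only [appBeta, subst]
    exact betas_app_appBeta _ _

theorem dev_subst (t : Lam) : ∀ k s, Betas (subst (dev t) k (dev s)) (dev (subst t k s)) := by
  induction t with
  | var i =>
    intro k s
    simp only [dev, subst]
    split_ifs <;> exact .refl
  | app a b iha ihb =>
    intro k s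
    simp only [dev]
    exact (betas_subst_appBeta (dev a) (dev b) (dev s) k).trans
      (betas_appBeta (iha k s) (ihb k s))
  | abs a ih =>
    intro k s
    simp only [dev, subst]
    refine betas_abs ?_
    rw [← dev_lift s 0]
    exact ih (k+1) (lift s 0)

theorem betas_dev (t : Lam) : Betas t (dev t) := by
  induction t with
  | var i => exact .refl
  | app a b iha ihb =>
    exact (betas_app iha ihb).trans (betas_app_appBeta (dev a) (dev b))
  | abs a ih => exact betas_abs ih

end Lam

theorem z_beta {s t : Lam} (h : Lam.Beta s t) :
    Lam.Betas t (Lam.dev s) ∧ Lam.Betas (Lam.dev s) (Lam.dev t) := by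
  induction h with
  | beta a b =>
    constructor
    · show Lam.Betas _ (Lam.appBeta (Lam.dev (Lam.abs a)) (Lam.dev b))
      simp only [Lam.dev, Lam.appBeta]
      exact Lam.betas_subst (Lam.betas_dev a) (Lam.betas_dev b) 0
    · show Lam.Betas (Lam.appBeta (Lam.dev (Lam.abs a)) (Lam.dev b)) _
      simp only [Lam.dev, Lam.appBeta]
      exact Lam.dev_subst a 0 b
  | appL t _ ih =>
    refine ⟨?_, ?_⟩
    · exact (Lam.betas_app ih.1 (Lam.betas_dev t)).trans (Lam.betas_app_appBeta _ _)
    · exact Lam.betas_appBeta ih.2 .refl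
  | appR s _ ih =>
    refine ⟨?_, ?_⟩
    · exact (Lam.betas_app (Lam.betas_dev s) ih.1).trans (Lam.betas_app_appBeta _ _)
    · exact Lam.betas_appBeta .refl ih.2
  | abs _ ih =>
    exact ⟨Lam.betas_abs ih.1, Lam.betas_abs ih.2⟩
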